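/- A matrix A ∈ ℝ^{m×n} (m, n ≥ 2) preserves Chebyshev systems if and only if all rows and all columns of A are alternance-free. -/
import Mathlib


open Filter

/-- A vector is Chebyshev if all of its components are non-zero. -/
def Cheb {n : ℕ} (v : Fin n → ℝ) : Prop := ∀ i, v i ≠ 0

/-- `mu a v` is the (unique, when `v` is Chebyshev) minimizer of `u ↦ ‖a - u • v‖`,
where `‖·‖` is the sup-norm on `Fin n → ℝ`. -/
noncomputable def mu {n : ℕ} (a v : Fin n → ℝ) : ℝ :=
  Classical.epsilon fun t : ℝ => ∀ u : ℝ, ‖a - t • v‖ ≤ ‖a - u • v‖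

noncomputable def phi {m n : ℕ} (A : Fin m → Fin n → ℝ) (v : Fin n → ℝ) : Fin m → ℝ :=
  fun i => mu (A i) v

noncomputable def psi {m n : ℕ} (A : Fin m → Fin n → ℝ) (u : Fin m → ℝ) : Fin n → ℝ :=
  fun j => mu (fun i => A i j) u

/-- `A` preserves Chebyshev systems. -/
def PreservesCheb {m n : ℕ} (A : Fin m → Fin n → ℝ) : Prop :=
  (∀ v : Fin n → ℝ, Cheb v → Cheb (phi A v)) ∧ (∀ u : Fin m → ℝ, Cheb u → Cheb (psi A u))

/-- A vector is alternance-free if exactly one component attains the max absolute value. -/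
def AlternanceFree {n : ℕ} (a : Fin n → ℝ) : Prop := ∃! i, |a i| = ‖a‖

/-- Chebyshev norm of the residual `A - u vᵀ`. -/
noncomputable def Cerr {m n : ℕ} (A : Fin m → Fin n → ℝ) (u : Fin m → ℝ) (v : Fin n → ℝ) : ℝ :=
  ⨆ i, ⨆ j, |A i j - u i * v j|

/-- Chebyshev norm of a matrix. -/
noncomputable def CnormM {m n : ℕ} (A : Fin m → Fin n → ℝ) : ℝ :=
  ⨆ i, ⨆ j, |A i j|

/-- The sequence `v⁽ᵏ⁾` of the alternating minimization method started at `v0`. -/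
noncomputable def vseq {m n : ℕ} (A : Fin m → Fin n → ℝ) (v0 : Fin n → ℝ) : ℕ → Fin n → ℝ
  | 0 => v0
  | k + 1 => psi A (phi A (vseq A v0 k))


lemma exists_min {n : ℕ} (a v : Fin n → ℝ) (hv : 0 < ‖v‖) :
    ∃ t : ℝ, ∀ u : ℝ, ‖a - t • v‖ ≤ ‖a - u • v‖ := by
  set f : ℝ → ℝ := fun t => ‖a - t • v‖ with hf
  have hcont : Continuous f :=
    (continuous_const.sub (continuous_id.smul continuous_const)).norm
  set R : ℝ := (2 * ‖a‖ + 1) / ‖v‖ with hRdef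
  have hR : 0 < R := by positivity
  obtain ⟨t, ht, hmin⟩ := (isCompact_Icc (a := -R) (b := R)).exists_isMinOn
    ⟨0, by constructor <;> linarith⟩ hcont.continuousOn
  refine ⟨t, fun u => ?_⟩
  by_cases hu : u ∈ Set.Icc (-R) R
  · exact hmin hu
  · have h1 : R < |u| := by
      simp only [Set.mem_Icc, not_and_or, not_le] at hu
      rcases hu with h | h <;> rcases abs_cases u with ⟨h2, h3⟩ | ⟨h2, h3⟩ <;> linarith
    have h2 : ‖a‖ + 1 ≤ f u := by
      have h3 : ‖u • v‖ - ‖a‖ ≤ ‖a - u • v‖ := by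
        have := norm_sub_norm_le (u • v) a
        rwa [norm_sub_rev] at this
      have h3' : |u| * ‖v‖ - ‖a‖ ≤ f u := by
        simpa [hf, norm_smul, Real.norm_eq_abs] using h3
      have h4 : (2 * ‖a‖ + 1) ≤ |u| * ‖v‖ := by
        have h5 : R * ‖v‖ ≤ |u| * ‖v‖ := by nlinarith
        rwa [hRdef, div_mul_cancel₀ _ (ne_of_gt hv)] at h5
      linarith
    have h5 : f t ≤ ‖a‖ := by
      have := hmin (Set.mem_Icc.mpr ⟨by linarith, le_of_lt hR⟩ : (0:ℝ) ∈ Set.Icc (-R) R)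
      simpa [hf] using this
    linarith

lemma mu_spec {n : ℕ} (a v : Fin n → ℝ) (hv : 0 < ‖v‖) :
    ∀ u : ℝ, ‖a - mu a v • v‖ ≤ ‖a - u • v‖ :=
  Classical.epsilon_spec (exists_min a v hv)

lemma cheb_norm_pos {n : ℕ} (hn : 1 ≤ n) (v : Fin n → ℝ) (hv : Cheb v) : 0 < ‖v‖ := by
  have i0 : Fin n := ⟨0, hn⟩
  calc (0:ℝ) < |v i0| := abs_pos.mpr (hv i0)
    _ ≤ ‖v‖ := by simpa [Real.norm_eq_abs] using norm_le_pi_norm v i0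

noncomputable def sgn (x : ℝ) : ℝ := if 0 ≤ x then 1 else -1

lemma sgn_ne_zero (x : ℝ) : sgn x ≠ 0 := by unfold sgn; split <;> norm_num

lemma sgn_mul_self (x : ℝ) : sgn x * x = |x| := by
  unfold sgn; split
  · rw [abs_of_nonneg ‹_›]; ring
  · rw [abs_of_neg (by linarith [not_le.mp ‹_›])]; ring

lemma sgn_sq (x : ℝ) : sgn x * sgn x = 1 := by unfold sgn; split <;> norm_num

lemma abs_sgn (x : ℝ) : |sgn x| = 1 := by unfold sgn; split <;> norm_num

lemma exists_norm_attained {n : ℕ} (hn : 1 ≤ n) (a : Fin n → ℝ) : ∃ j, |a j| = ‖a‖ := by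
  obtain ⟨j, _, hj⟩ := Finset.exists_max_image Finset.univ (fun i => |a i|)
    ⟨⟨0, hn⟩, Finset.mem_univ _⟩
  refine ⟨j, le_antisymm ?_ ?_⟩
  · simpa [Real.norm_eq_abs] using norm_le_pi_norm a j
  · exact (pi_norm_le_iff_of_nonneg (abs_nonneg _)).mpr fun i => by
      simpa [Real.norm_eq_abs] using hj i (Finset.mem_univ i)

lemma key {n : ℕ} (hn : 2 ≤ n) (a : Fin n → ℝ) :
    (∀ v : Fin n → ℝ, Cheb v → mu a v ≠ 0) ↔ AlternanceFree a := by
  haveI : Nontrivial (Fin n) :=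
    ⟨⟨⟨0, by omega⟩, ⟨1, by omega⟩, by simp [Fin.ext_iff]⟩⟩
  constructor
  · intro h
    by_contra hAF
    obtain ⟨j1, hj1⟩ := exists_norm_attained (by omega) a
    have hex : ∃ j2, j2 ≠ j1 ∧ |a j2| = ‖a‖ := by
      by_contra hc
      push_neg at hc
      exact hAF ⟨j1, hj1, fun j hj => by
        by_contra hne; exact (hc j hne) hj⟩
    obtain ⟨j2, hj12, hj2⟩ := hex
    set v : Fin n → ℝ := fun j =>
      if j = j1 then sgn (a j1) else if j = j2 then -(sgn (a j2)) else 1 with hvdef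
    have hv1 : v j1 = sgn (a j1) := by simp [hvdef]
    have hv2 : v j2 = -(sgn (a j2)) := by simp [hvdef, hj12]
    have hvcheb : Cheb v := by
      intro j
      simp only [hvdef]
      split
      · exact sgn_ne_zero _
      · split
        · simpa using sgn_ne_zero (a j2)
        · norm_num
    have hvnorm : 0 < ‖v‖ := cheb_norm_pos (by omega) v hvcheb
    have hlb : ∀ u : ℝ, ‖a‖ + |u| ≤ ‖a - u • v‖ := by
      intro u
      have e1 : |a j1 - u * v j1| = |‖a‖ - u| := by
        have e : a j1 - u * v j1 = sgn (a j1) * (‖a‖ - u) := by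
          rw [hv1, ← hj1, ← sgn_mul_self (a j1)]
          linear_combination (-(a j1)) * sgn_sq (a j1)
        rw [e, abs_mul, abs_sgn, one_mul]
      have e2 : |a j2 - u * v j2| = |‖a‖ + u| := by
        have e : a j2 - u * v j2 = sgn (a j2) * (‖a‖ + u) := by
          rw [hv2, ← hj2, ← sgn_mul_self (a j2)]
          linear_combination (-(a j2)) * sgn_sq (a j2)
        rw [e, abs_mul, abs_sgn, one_mul]
      have b1 : |a j1 - u * v j1| ≤ ‖a - u • v‖ := by
        simpa [Real.norm_eq_abs] using norm_le_pi_norm (a - u • v) j1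
      have b2 : |a j2 - u * v j2| ≤ ‖a - u • v‖ := by
        simpa [Real.norm_eq_abs] using norm_le_pi_norm (a - u • v) j2
      rcases le_or_gt 0 u with hu | hu
      · have heq : ‖a‖ + |u| = |‖a‖ + u| := by
          rw [abs_of_nonneg hu, abs_of_nonneg (by positivity)]
        rw [heq, ← e2]; exact b2
      · have heq : ‖a‖ + |u| = |‖a‖ - u| := by
          rw [abs_of_neg hu, abs_of_nonneg (by nlinarith [norm_nonneg a])]; ring
        rw [heq, ← e1]; exact b1
    have hmu := mu_spec a v hvnorm 0
    have h0 : ‖a - (0:ℝ) • v‖ = ‖a‖ := by simp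
    rw [h0] at hmu
    have hlb' := hlb (mu a v)
    have habs : |mu a v| ≤ 0 := by linarith
    exact h v hvcheb (abs_eq_zero.mp (le_antisymm habs (abs_nonneg _)))
  · rintro ⟨j0, hj0, huniq⟩ v hv
    have hlt : ∀ j, j ≠ j0 → |a j| < ‖a‖ := by
      intro j hj
      refine lt_of_le_of_ne ?_ fun h => hj (huniq j h)
      simpa [Real.norm_eq_abs] using norm_le_pi_norm a j
    obtain ⟨i1, hi1⟩ := exists_ne j0
    have hapos : 0 < ‖a‖ := lt_of_le_of_lt (abs_nonneg (a i1)) (hlt i1 hi1)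
    have hvnorm : 0 < ‖v‖ := cheb_norm_pos (by omega) v hv
    set c : ℝ := a j0 / v j0 with hc
    have hne : (Finset.univ.erase j0).Nonempty := by
      rw [← Finset.card_pos, Finset.card_erase_of_mem (Finset.mem_univ _)]
      simp; omega
    set ε : ℝ := min 1 ((Finset.univ.erase j0).inf' hne
      fun j => (‖a‖ - |a j|) / (|c * v j| + 1)) with hε
    have hεpos : 0 < ε := by
      rw [hε]
      apply lt_min one_pos
      rw [Finset.lt_inf'_iff]
      intro j hj
      have := hlt j (Finset.ne_of_mem_erase hj)
      apply div_pos (by linarith) (by positivity)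
    have hεle1 : ε ≤ 1 := min_le_left _ _
    have hcoord : ∀ j, |a j - (ε * c) * v j| < ‖a‖ := by
      intro j
      by_cases hj : j = j0
      · subst hj
        have hcv : c * v j = a j := div_mul_cancel₀ _ (hv j)
        have e : a j - (ε * c) * v j = (1 - ε) * a j := by
          rw [mul_assoc, hcv]; ring
        rw [e, abs_mul]
        have h1 : |(1:ℝ) - ε| < 1 := by
          rw [abs_lt]; constructor <;> linarith
        calc |1 - ε| * |a j| < 1 * |a j| := by
              apply mul_lt_mul_of_pos_right h1; rw [hj0]; exact hapos
          _ = ‖a‖ := by rw [one_mul, hj0]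
      · have hεle : ε ≤ (‖a‖ - |a j|) / (|c * v j| + 1) :=
          le_trans (min_le_right _ _)
            (Finset.inf'_le _ (Finset.mem_erase.mpr ⟨hj, Finset.mem_univ _⟩))
        have hd : (0:ℝ) < |c * v j| + 1 := by positivity
        have h2 : ε * (|c * v j| + 1) ≤ ‖a‖ - |a j| := by
          rw [← le_div_iff₀ hd]; exact hεle
        calc |a j - (ε * c) * v j| ≤ |a j| + |(ε * c) * v j| := abs_sub _ _
          _ = |a j| + ε * |c * v j| := by
              rw [mul_assoc, abs_mul, abs_of_pos hεpos]
          _ < |a j| + ε * (|c * v j| + 1) := by nlinarith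
          _ ≤ ‖a‖ := by linarith
    have hflt : ‖a - (ε * c) • v‖ < ‖a‖ := by
      rw [pi_norm_lt_iff hapos]
      intro j
      simpa [Real.norm_eq_abs] using hcoord j
    intro hmu0
    have hsp := mu_spec a v hvnorm (ε * c)
    rw [hmu0] at hsp
    simp only [zero_smul, sub_zero] at hsp
    linarith

theorem stmt5 {m n : ℕ} (hm : 2 ≤ m) (hn : 2 ≤ n) (A : Fin m → Fin n → ℝ) :
    PreservesCheb A ↔
      (∀ i, AlternanceFree (A i)) ∧ (∀ j, AlternanceFree fun i => A i j) := by
  constructor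
  · rintro ⟨h1, h2⟩
    exact ⟨fun i => (key hn (A i)).mp fun v hv => h1 v hv i,
           fun j => (key hm (fun i => A i j)).mp fun u hu => h2 u hu j⟩
  · rintro ⟨h1, h2⟩
    exact ⟨fun v hv i => (key hn (A i)).mpr (h1 i) v hv,
           fun u hu j => (key hm (fun i => A i j)).mpr (h2 j) u hu⟩
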